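/- arXiv:math/0605306 — 2 statements merged into one kernel-verified Lean document; each statement's English description precedes it below -/
import Mathlib

section
/- Let ρ and σ be two well agreeing near weights on R. Then ℕ² \ H = ⋃_{a ∈ Γ̃} Δ(a). -/
structure NearWeight (F R : Type*) [Field F] [CommRing R] [Algebra F R] where
  w : R → WithBot ℕ
  N0 : ∀ f : R, w f = ⊥ ↔ f = 0
  N1 : ∀ (c : F) (f : R), c ≠ 0 → w (c • f) = w f
  N2 : ∀ f g : R, w (f + g) ≤ max (w f) (w g)
  N3 : ∀ f g h : R, w f < w g → w (f * h) ≤ w (g * h)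
  N3' : ∀ f g h : R, w f < w g → w 1 < w h → w (f * h) < w (g * h)
  N4 : ∀ f g : R, w 1 < w f → w 1 < w g → w f = w g →
      ∃ c : F, c ≠ 0 ∧ w (f - c • g) < w f
  N5 : ∀ f g : R, w (f * g) ≤ w f + w g
  N5' : ∀ f g : R, w 1 < w f → w 1 < w g → w (f * g) = w f + w g
  norm0 : ∀ f : R, f ≠ 0 → w f ≤ w 1 → w f = 0
  normgcd : ∀ d : ℕ, (∀ f : R, w 1 < w f → ∃ k : ℕ, w f = ((d * k : ℕ) : WithBot ℕ)) → d = 1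

namespace NearWeight

variable {F R : Type*} [Field F] [CommRing R] [Algebra F R]

def U (ρ : NearWeight F R) : Set R := {r | ρ.w r ≤ ρ.w 1}

def M (ρ : NearWeight F R) : Set R := {r | ρ.w 1 < ρ.w r}

def nval (ρ : NearWeight F R) (f : R) : ℕ := WithBot.unbotD 0 (ρ.w f)

def Hset (ρ σ : NearWeight F R) (S : Set R) : Set (ℕ × ℕ) :=
  {p | ∃ f ∈ S, f ≠ 0 ∧ (ρ.nval f, σ.nval f) = p}

def WellAgreeing (ρ σ : NearWeight F R) : Prop :=
  (Hset ρ σ Set.univ)ᶜ.Finite ∧ ρ.U ∩ σ.U = Set.range (algebraMap F R)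

noncomputable def xH (ρ σ : NearWeight F R) (n : ℕ) : ℕ :=
  sInf {m | (m, n) ∈ Hset ρ σ Set.univ}

noncomputable def yH (ρ σ : NearWeight F R) (n : ℕ) : ℕ :=
  sInf {m | (n, m) ∈ Hset ρ σ Set.univ}

def lub (a b : ℕ × ℕ) : ℕ × ℕ := (max a.1 b.1, max a.2 b.2)

noncomputable def Gamma (ρ σ : NearWeight F R) : Set (ℕ × ℕ) :=
  {p | ∃ m : ℕ, p = (m, yH ρ σ m)} ∪ {p | ∃ n : ℕ, p = (xH ρ σ n, n)}

def Hbarx (ρ σ : NearWeight F R) : Set ℕ := {m | (m, 0) ∈ Hset ρ σ Set.univ}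

def Hbary (ρ σ : NearWeight F R) : Set ℕ := {n | (0, n) ∈ Hset ρ σ Set.univ}

noncomputable def GammaTilde (ρ σ : NearWeight F R) : Set (ℕ × ℕ) :=
  {p | ∃ m : ℕ, m ∉ Hbarx ρ σ ∧ p = (m, yH ρ σ m)}

def Delta (p : ℕ × ℕ) : Set (ℕ × ℕ) :=
  {q | (q.1 = p.1 ∧ q.2 < p.2) ∨ (q.2 = p.2 ∧ q.1 < p.1)}

noncomputable def tw (ρ : NearWeight F R) (f : R) : ℤ :=
  sInf {z : ℤ | ∃ g ∈ ρ.M, z = (ρ.nval (f * g) : ℤ) - (ρ.nval g : ℤ)}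

end NearWeight


namespace NearWeight

variable {F R : Type*} [Field F] [CommRing R] [Algebra F R]

lemma w_nval (ρ : NearWeight F R) {f : R} (hf : f ≠ 0) :
    ρ.w f = (ρ.nval f : WithBot ℕ) := by
  rcases h : ρ.w f with _ | k
  · exact absurd ((ρ.N0 f).1 h) hf
  · simp only [nval, h]; rfl

lemma mem_HsetUniv {ρ σ : NearWeight F R} {m n : ℕ} :
    (m, n) ∈ Hset ρ σ Set.univ ↔ ∃ f : R, f ≠ 0 ∧ ρ.nval f = m ∧ σ.nval f = n := by
  constructor
  · rintro ⟨f, -, hf, h⟩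
    exact ⟨f, hf, congrArg Prod.fst h, congrArg Prod.snd h⟩
  · rintro ⟨f, hf, h1, h2⟩
    exact ⟨f, trivial, hf, by simp [h1, h2]⟩

lemma w_neg (ρ : NearWeight F R) (g : R) : ρ.w (-g) = ρ.w g := by
  have := ρ.N1 (-1 : F) g (by norm_num)
  rwa [neg_one_smul] at this

/-- Mixed lub closure: if `(m,n)` and `(m',n')` are in H with `m' < m`, `n < n'`,
then `(m, n')` is in H (witnessed by `f + g`). -/
lemma mixed (ρ σ : NearWeight F R) {m m' n n' : ℕ}
    (hp : (m, n) ∈ Hset ρ σ Set.univ) (hq : (m', n') ∈ Hset ρ σ Set.univ)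
    (h1 : m' < m) (h2 : n < n') : (m, n') ∈ Hset ρ σ Set.univ := by
  rw [mem_HsetUniv] at hp hq ⊢
  obtain ⟨f, hf, hfm, hfn⟩ := hp
  obtain ⟨g, hg, hgm, hgn⟩ := hq
  have hfg : f + g ≠ 0 := by
    intro h
    have hfe : f = -g := eq_neg_of_add_eq_zero_left h
    have : ρ.w f = ρ.w g := by rw [hfe, ρ.w_neg]
    have : ρ.nval f = ρ.nval g := by simp [nval, this]
    omega
  have wf : ρ.w f = (m : WithBot ℕ) := by rw [ρ.w_nval hf, hfm]
  have wg : ρ.w g = (m' : WithBot ℕ) := by rw [ρ.w_nval hg, hgm]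
  have wf' : σ.w f = (n : WithBot ℕ) := by rw [σ.w_nval hf, hfn]
  have wg' : σ.w g = (n' : WithBot ℕ) := by rw [σ.w_nval hg, hgn]
  refine ⟨f + g, hfg, ?_, ?_⟩
  · have hub : ρ.w (f + g) ≤ (m : WithBot ℕ) := by
      have := ρ.N2 f g
      rw [wf, wg] at this
      exact this.trans (by simp [le_of_lt h1])
    have hlb : (m : WithBot ℕ) ≤ ρ.w (f + g) := by
      have h3 := ρ.N2 (f + g) (-g)
      rw [add_neg_cancel_right, ρ.w_neg, wf, wg] at h3
      rcases le_max_iff.1 h3 with h4 | h4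
      · exact h4
      · exact absurd h4 (by exact_mod_cast not_le.2 h1)
    have : ρ.w (f + g) = ((m : ℕ) : WithBot ℕ) := le_antisymm hub hlb
    have := (ρ.w_nval hfg).symm.trans this
    exact_mod_cast this
  · have hub : σ.w (f + g) ≤ (n' : WithBot ℕ) := by
      have := σ.N2 f g
      rw [wf', wg'] at this
      exact this.trans (by simp [le_of_lt h2])
    have hlb : (n' : WithBot ℕ) ≤ σ.w (f + g) := by
      have h3 := σ.N2 (f + g) (-f)
      have hsumeq : f + g + -f = g := by ring
      rw [hsumeq, σ.w_neg, wf', wg'] at h3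
      rcases le_max_iff.1 h3 with h4 | h4
      · exact h4
      · exact absurd h4 (by exact_mod_cast not_le.2 h2)
    have : σ.w (f + g) = ((n' : ℕ) : WithBot ℕ) := le_antisymm hub hlb
    have := (σ.w_nval hfg).symm.trans this
    exact_mod_cast this

/-- Subtraction lemma via N4: if `(m,n), (m',n) ∈ H` with `m' < m` and `n > 0`,
then `(m, n') ∈ H` for some `n' < n`. -/
lemma subtract (ρ σ : NearWeight F R) (h1R : (1 : R) ≠ 0) {m m' n : ℕ}
    (hp : (m, n) ∈ Hset ρ σ Set.univ) (hq : (m', n) ∈ Hset ρ σ Set.univ)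
    (hlt : m' < m) (hn : 0 < n) :
    ∃ n' < n, (m, n') ∈ Hset ρ σ Set.univ := by
  rw [mem_HsetUniv] at hp hq
  obtain ⟨f, hf, hfm, hfn⟩ := hp
  obtain ⟨g, hg, hgm, hgn⟩ := hq
  have wf : ρ.w f = (m : WithBot ℕ) := by rw [ρ.w_nval hf, hfm]
  have wg : ρ.w g = (m' : WithBot ℕ) := by rw [ρ.w_nval hg, hgm]
  have wf' : σ.w f = (n : WithBot ℕ) := by rw [σ.w_nval hf, hfn]
  have wg' : σ.w g = (n : WithBot ℕ) := by rw [σ.w_nval hg, hgn]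
  have w1 : σ.w 1 = 0 := σ.norm0 1 h1R le_rfl
  have hMf : σ.w 1 < σ.w f := by
    rw [w1, wf']
    exact_mod_cast hn
  have hMg : σ.w 1 < σ.w g := by
    rw [w1, wg']
    exact_mod_cast hn
  obtain ⟨c, hc, hsub⟩ := σ.N4 f g hMf hMg (wf'.trans wg'.symm)
  set h := f - c • g with hh
  have hne : h ≠ 0 := by
    intro h0
    have hfe : f = c • g := by rw [← sub_eq_zero, ← hh, h0]
    have : ρ.w f = ρ.w g := by rw [hfe, ρ.N1 c g hc]
    rw [wf, wg] at this
    exact absurd (by exact_mod_cast this) (by omega)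
  have wc : ρ.w (c • g) = (m' : WithBot ℕ) := by rw [ρ.N1 c g hc, wg]
  have whm : ρ.w h = (m : WithBot ℕ) := by
    have hub : ρ.w h ≤ (m : WithBot ℕ) := by
      have h3 := ρ.N2 f (-(c • g))
      rw [← sub_eq_add_neg, ← hh, ρ.w_neg, wf, wc] at h3
      exact h3.trans (by simp [le_of_lt hlt])
    have hlb : (m : WithBot ℕ) ≤ ρ.w h := by
      have h3 := ρ.N2 h (c • g)
      rw [hh, sub_add_cancel, wf, wc] at h3
      rcases le_max_iff.1 h3 with h4 | h4
      · exact h4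
      · exact absurd h4 (by exact_mod_cast not_le.2 hlt)
    exact le_antisymm hub hlb
  refine ⟨σ.nval h, ?_, ?_⟩
  · have : σ.w h < (n : WithBot ℕ) := by rwa [wf'] at hsub
    rw [σ.w_nval hne] at this
    exact_mod_cast this
  · rw [mem_HsetUniv]
    refine ⟨h, hne, ?_, rfl⟩
    have := (ρ.w_nval hne).symm.trans whm
    exact_mod_cast this

end NearWeight

variable {F R : Type*} [Field F] [CommRing R] [Algebra F R]

theorem stmt7
    (hinj : Function.Injective (algebraMap F R))
    (hsur : ¬ Function.Surjective (algebraMap F R))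
    (ρ σ : NearWeight F R) (hwa : NearWeight.WellAgreeing ρ σ) :
    (NearWeight.Hset ρ σ Set.univ)ᶜ =
      ⋃ a ∈ NearWeight.GammaTilde ρ σ, NearWeight.Delta a := by
  classical
  have h1R : (1 : R) ≠ 0 := by
    intro h
    have h2 : algebraMap F R 1 = algebraMap F R 0 := by simp [h]
    exact one_ne_zero (hinj h2)
  have hfin := hwa.1
  have swap : ∀ a b : ℕ, (a, b) ∈ NearWeight.Hset ρ σ Set.univ ↔
      (b, a) ∈ NearWeight.Hset σ ρ Set.univ := by
    intro a b
    simp only [NearWeight.mem_HsetUniv]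
    constructor
    · rintro ⟨f, hf, h1, h2⟩; exact ⟨f, hf, h2, h1⟩
    · rintro ⟨f, hf, h1, h2⟩; exact ⟨f, hf, h2, h1⟩
  have col : ∀ n : ℕ, {k | (k, n) ∈ NearWeight.Hset ρ σ Set.univ}.Nonempty := by
    intro n
    by_contra hcon
    rw [Set.not_nonempty_iff_eq_empty] at hcon
    have hsub : Set.range (fun m : ℕ => ((m, n) : ℕ × ℕ)) ⊆
        (NearWeight.Hset ρ σ Set.univ)ᶜ := by
      rintro p ⟨m, rfl⟩
      intro hmem
      have : m ∈ {k | (k, n) ∈ NearWeight.Hset ρ σ Set.univ} := hmem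
      rw [hcon] at this
      exact this
    have hinj2 : Function.Injective (fun m : ℕ => ((m, n) : ℕ × ℕ)) := by
      intro a b hab
      simpa using congrArg Prod.fst hab
    exact (Set.infinite_range_of_injective hinj2) (hfin.subset hsub)
  have row : ∀ m : ℕ, {k | (m, k) ∈ NearWeight.Hset ρ σ Set.univ}.Nonempty := by
    intro m
    by_contra hcon
    rw [Set.not_nonempty_iff_eq_empty] at hcon
    have hsub : Set.range (fun k : ℕ => ((m, k) : ℕ × ℕ)) ⊆
        (NearWeight.Hset ρ σ Set.univ)ᶜ := by
      rintro p ⟨k, rfl⟩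
      intro hmem
      have : k ∈ {k | (m, k) ∈ NearWeight.Hset ρ σ Set.univ} := hmem
      rw [hcon] at this
      exact this
    have hinj2 : Function.Injective (fun k : ℕ => ((m, k) : ℕ × ℕ)) := by
      intro a b hab
      simpa using congrArg Prod.snd hab
    exact (Set.infinite_range_of_injective hinj2) (hfin.subset hsub)
  have yH_mem : ∀ m, (m, NearWeight.yH ρ σ m) ∈ NearWeight.Hset ρ σ Set.univ :=
    fun m => Nat.sInf_mem (row m)
  have yH_le : ∀ m k, (m, k) ∈ NearWeight.Hset ρ σ Set.univ →
      NearWeight.yH ρ σ m ≤ k := fun m k h => Nat.sInf_le h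
  have xH_mem : ∀ n, (NearWeight.xH ρ σ n, n) ∈ NearWeight.Hset ρ σ Set.univ :=
    fun n => Nat.sInf_mem (col n)
  have xH_le : ∀ n k, (k, n) ∈ NearWeight.Hset ρ σ Set.univ →
      NearWeight.xH ρ σ n ≤ k := fun n k h => Nat.sInf_le h
  have subswap : ∀ {a b b' : ℕ}, (a, b) ∈ NearWeight.Hset ρ σ Set.univ →
      (a, b') ∈ NearWeight.Hset ρ σ Set.univ → b' < b → 0 < a →
      ∃ a' < a, (a', b) ∈ NearWeight.Hset ρ σ Set.univ := by
    intro a b b' hab hab' hlt ha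
    obtain ⟨a', ha', hmem⟩ :=
      NearWeight.subtract σ ρ h1R ((swap a b).1 hab) ((swap a b').1 hab') hlt ha
    exact ⟨a', ha', (swap a' b).2 hmem⟩
  ext p
  obtain ⟨m, n⟩ := p
  simp only [Set.mem_compl_iff, Set.mem_iUnion, exists_prop]
  constructor
  · intro hmn
    by_cases hc : ∃ n'' < n, (m, n'') ∈ NearWeight.Hset ρ σ Set.univ
    · -- Case B : something strictly below (m,n) in the same column lies in H
      obtain ⟨n'', hn''lt, hn''⟩ := hc
      have h0n : (0, n) ∉ NearWeight.Hset ρ σ Set.univ := by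
        intro h0
        rcases Nat.eq_zero_or_pos m with hm0 | hm0
        · subst hm0; exact hmn h0
        · exact hmn (NearWeight.mixed ρ σ hn'' h0 hm0 hn''lt)
      have hm'mem : (NearWeight.xH ρ σ n, n) ∈ NearWeight.Hset ρ σ Set.univ := xH_mem n
      have hm'pos : 0 < NearWeight.xH ρ σ n := by
        rcases Nat.eq_zero_or_pos (NearWeight.xH ρ σ n) with h | h
        · rw [h] at hm'mem; exact absurd hm'mem h0n
        · exact h
      have hyH : NearWeight.yH ρ σ (NearWeight.xH ρ σ n) = n := by
        have hle : NearWeight.yH ρ σ (NearWeight.xH ρ σ n) ≤ n := yH_le _ _ hm'mem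
        rcases lt_or_eq_of_le hle with hlt2 | he
        · exfalso
          obtain ⟨m'', hm''lt, hm''mem⟩ :=
            subswap hm'mem (yH_mem (NearWeight.xH ρ σ n)) hlt2 hm'pos
          have := xH_le n m'' hm''mem
          omega
        · exact he
      have hm'barx : NearWeight.xH ρ σ n ∉ NearWeight.Hbarx ρ σ := by
        intro hb
        have h0 := yH_le (NearWeight.xH ρ σ n) 0 hb
        have hnpos : 0 < n := by omega
        omega
      have hmm' : m < NearWeight.xH ρ σ n := by
        rcases lt_trichotomy m (NearWeight.xH ρ σ n) with h | h | h
        · exact h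
        · exfalso; rw [← h] at hm'mem; exact hmn hm'mem
        · exact absurd (NearWeight.mixed ρ σ hn'' hm'mem h hn''lt) hmn
      refine ⟨(NearWeight.xH ρ σ n, n), ⟨NearWeight.xH ρ σ n, hm'barx, by rw [hyH]⟩,
        Or.inr ⟨rfl, hmm'⟩⟩
    · -- Case A : nothing below (m,n) in the column lies in H
      push_neg at hc
      have hnyH : n < NearWeight.yH ρ σ m := by
        by_contra hle
        push_neg at hle
        rcases eq_or_lt_of_le hle with he | hl
        · exact hmn (he ▸ yH_mem m)
        · exact hc _ hl (yH_mem m)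
      have hbarx : m ∉ NearWeight.Hbarx ρ σ := by
        intro hb
        have := yH_le m 0 hb
        omega
      exact ⟨(m, NearWeight.yH ρ σ m), ⟨m, hbarx, rfl⟩, Or.inl ⟨rfl, hnyH⟩⟩
  · rintro ⟨a, ⟨m₀, hbx, rfl⟩, hdel⟩
    simp only [NearWeight.Delta, Set.mem_setOf_eq] at hdel
    have hn₀pos : 0 < NearWeight.yH ρ σ m₀ := by
      rcases Nat.eq_zero_or_pos (NearWeight.yH ρ σ m₀) with h | h
      · exfalso
        have := yH_mem m₀
        rw [h] at this
        exact hbx this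
      · exact h
    rcases hdel with ⟨h1, h2⟩ | ⟨h1, h2⟩
    · intro hmem
      have := yH_le m₀ n (by rw [← h1]; exact hmem)
      omega
    · intro hmem
      have hmem' : (m, NearWeight.yH ρ σ m₀) ∈ NearWeight.Hset ρ σ Set.univ := by
        rw [← h1]; exact hmem
      obtain ⟨n', hn', hn'mem⟩ :=
        NearWeight.subtract ρ σ h1R (yH_mem m₀) hmem' h2 hn₀pos
      have := yH_le m₀ n' hn'mem
      omega
end

section
/- Let ρ and σ be two well agreeing near weights on R, let f ∈ R \ {0}, and let I := (f) be the principal ideal of R generated by f. Then the sets H_x ∩ (ℕ² \ H(I)) and H_y ∩ (ℕ² \ H(I)) are both finite. -/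
variable {F R : Type*} [Field F] [CommRing R] [Algebra F R]


open NearWeight

lemma NearWeight.wval (ρ : NearWeight F R) {f : R} (hf : f ≠ 0) :
    ρ.w f = (ρ.nval f : WithBot ℕ) := by
  obtain ⟨n, hn⟩ := Option.ne_none_iff_exists'.mp ((not_iff_not.mpr (ρ.N0 f)).mpr hf)
  rw [NearWeight.nval, hn]
  rfl

lemma NearWeight.wone (ρ : NearWeight F R) (h1 : (1:R) ≠ 0) : ρ.w 1 = 0 :=
  ρ.norm0 1 h1 le_rfl

lemma NearWeight.ne_zero_of_wpos (ρ : NearWeight F R) {f : R} (hf : 0 < ρ.w f) :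
    f ≠ 0 := by
  intro e
  rw [e, (ρ.N0 0).mpr rfl] at hf
  exact absurd hf (by simp)

lemma NearWeight.mul_ne (ρ : NearWeight F R) (h1 : (1:R) ≠ 0) {h u : R} (hh : h ≠ 0)
    (hu : 0 < ρ.w u) : h * u ≠ 0 := by
  have := ρ.N3' 0 h u
    (by rw [(ρ.N0 0).mpr rfl]
        exact Ne.bot_lt ((not_iff_not.mpr (ρ.N0 h)).mpr hh))
    (by rw [ρ.wone h1]; exact hu)
  rw [zero_mul, (ρ.N0 0).mpr rfl] at this
  exact (not_iff_not.mpr (ρ.N0 (h*u))).mp this.ne'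

lemma NearWeight.walg (ρ : NearWeight F R) (h1 : (1:R) ≠ 0) {c : F} (hc : c ≠ 0) :
    ρ.w (algebraMap F R c) = 0 := by
  rw [Algebra.algebraMap_eq_smul_one, ρ.N1 c 1 hc, ρ.wone h1]

lemma NearWeight.w_sub_alg (ρ : NearWeight F R) (h1 : (1:R) ≠ 0) {u : R} {c : F} (hc : c ≠ 0)
    (hu : 0 < ρ.w u) : ρ.w (u - algebraMap F R c) = ρ.w u := by
  have hneg : ρ.w (-(algebraMap F R c)) = 0 := by
    rw [← map_neg]; exact ρ.walg h1 (neg_ne_zero.mpr hc)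
  apply le_antisymm
  · have := ρ.N2 u (-(algebraMap F R c))
    rw [← sub_eq_add_neg] at this
    refine this.trans ?_
    rw [hneg]
    exact max_le le_rfl hu.le
  · have := ρ.N2 (u - algebraMap F R c) (algebraMap F R c)
    rw [sub_add_cancel, ρ.walg h1 hc] at this
    rcases max_cases (ρ.w (u - algebraMap F R c)) 0 with ⟨he, _⟩ | ⟨he, _⟩
    · rw [he] at this; exact this
    · rw [he] at this; exact absurd this (not_le.mpr hu)

lemma NearWeight.w_sub_alg_le (σ : NearWeight F R) (h1 : (1:R) ≠ 0) {u : R} {c : F} (hc : c ≠ 0)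
    (hu : σ.w u ≤ 0) : σ.w (u - algebraMap F R c) ≤ 0 := by
  have hneg : σ.w (-(algebraMap F R c)) = 0 := by
    rw [← map_neg]; exact σ.walg h1 (neg_ne_zero.mpr hc)
  have := σ.N2 u (-(algebraMap F R c))
  rw [← sub_eq_add_neg, hneg] at this
  exact this.trans (max_le hu le_rfl)

lemma NearWeight.descent (ρ σ : NearWeight F R) (h1 : (1:R) ≠ 0)
    (hu : ∃ u : R, 0 < ρ.w u ∧ σ.w u ≤ 0)
    (S : Set R) (hS : S.Nonempty) (h0S : (0:R) ∉ S)
    (hmul : ∀ h ∈ S, ∀ u : R, 0 < ρ.w u → σ.w u ≤ 0 → h * u ∈ S) :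
    ∃ h ∈ S, σ.w h ≤ 0 := by
  obtain ⟨u0, hu1, hu2⟩ := hu
  set T : Set ℕ := {n | ∃ h ∈ S, σ.nval h = n} with hT
  have hTne : T.Nonempty := ⟨σ.nval hS.choose, hS.choose, hS.choose_spec, rfl⟩
  obtain ⟨h, hhS, hhval⟩ := Nat.sInf_mem hTne
  have hne : h ≠ 0 := fun e => h0S (e ▸ hhS)
  have hw : σ.w h = ((sInf T : ℕ) : WithBot ℕ) := by rw [σ.wval hne, hhval]
  rcases Nat.eq_zero_or_pos (sInf T) with hn | hn
  · refine ⟨h, hhS, ?_⟩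
    rw [hw, hn]
    exact le_rfl
  exfalso
  have hhu0S : h * u0 ∈ S := hmul h hhS u0 hu1 hu2
  have hhu0ne : h * u0 ≠ 0 := fun e => h0S (e ▸ hhu0S)
  have hle : σ.w (h * u0) ≤ ((sInf T : ℕ) : WithBot ℕ) := by
    refine (σ.N5 h u0).trans ?_
    calc σ.w h + σ.w u0 ≤ ((sInf T : ℕ) : WithBot ℕ) + 0 := add_le_add hw.le hu2
    _ = _ := by simp
  have hmem : σ.nval (h * u0) ∈ T := ⟨h * u0, hhu0S, rfl⟩
  have heq : σ.w (h * u0) = ((sInf T : ℕ) : WithBot ℕ) := by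
    refine le_antisymm hle ?_
    rw [σ.wval hhu0ne]
    exact_mod_cast Nat.sInf_le hmem
  have hM1 : σ.w 1 < σ.w (h * u0) := by
    rw [σ.wone h1, heq]; exact_mod_cast hn
  have hM2 : σ.w 1 < σ.w h := by
    rw [σ.wone h1, hw]; exact_mod_cast hn
  obtain ⟨c, hc, hlt⟩ := σ.N4 (h * u0) h hM1 hM2 (heq.trans hw.symm)
  have hfact : h * u0 - c • h = h * (u0 - algebraMap F R c) := by
    rw [Algebra.smul_def]; ring
  rw [hfact, heq] at hlt
  set u' := u0 - algebraMap F R c with hu'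
  have hu'1 : 0 < ρ.w u' := by rw [hu', ρ.w_sub_alg h1 hc hu1]; exact hu1
  have hu'2 : σ.w u' ≤ 0 := σ.w_sub_alg_le h1 hc hu2
  have hS' : h * u' ∈ S := hmul h hhS u' hu'1 hu'2
  have hne' : h * u' ≠ 0 := fun e => h0S (e ▸ hS')
  have hmem' : σ.nval (h * u') ∈ T := ⟨h * u', hS', rfl⟩
  have hlt' : σ.nval (h * u') < sInf T := by
    rw [σ.wval hne'] at hlt
    exact_mod_cast hlt
  exact absurd (Nat.sInf_le hmem') (not_le.mpr hlt')

lemma NearWeight.key (ρ σ : NearWeight F R) (h1 : (1:R) ≠ 0)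
    (hU : ρ.U ∩ σ.U ⊆ Set.range (algebraMap F R))
    (hu : ∃ u : R, 0 < ρ.w u ∧ σ.w u ≤ 0)
    (f : R) (hf : f ≠ 0) :
    (∃ g : R, 0 < ρ.w (f * g) ∧ σ.w (f * g) ≤ 0) ∨ ∃ r : R, f * r = 1 := by
  by_cases hpos : ∃ g : R, 0 < ρ.w (f * g)
  · left
    obtain ⟨g0, hg0⟩ := hpos
    set S : Set R := {h | (∃ g : R, f * g = h) ∧ 0 < ρ.w h} with hSdef
    have hS : S.Nonempty := ⟨f * g0, ⟨g0, rfl⟩, hg0⟩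
    have h0S : (0:R) ∉ S := fun hz =>
      absurd hz.2 (by rw [(ρ.N0 0).mpr rfl]; simp)
    have hmul : ∀ h ∈ S, ∀ u : R, 0 < ρ.w u → σ.w u ≤ 0 → h * u ∈ S := by
      rintro h ⟨⟨g, rfl⟩, hh⟩ u hu1 _
      refine ⟨⟨g * u, by ring⟩, ?_⟩
      have h5 := ρ.N5' (f * g) u (by rw [ρ.wone h1]; exact hh) (by rw [ρ.wone h1]; exact hu1)
      rw [h5]
      calc (0:WithBot ℕ) < ρ.w (f * g) := hh
      _ ≤ ρ.w (f * g) + ρ.w u := le_add_of_nonneg_right hu1.le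
    obtain ⟨h, ⟨⟨g, rfl⟩, hh1⟩, hh2⟩ := ρ.descent σ h1 hu S hS h0S hmul
    exact ⟨g, hh1, hh2⟩
  · right
    push_neg at hpos
    set S : Set R := {h | h ≠ 0 ∧ ∃ g : R, f * g = h} with hSdef
    have hS : S.Nonempty := ⟨f * 1, by rwa [mul_one], 1, rfl⟩
    have h0S : (0:R) ∉ S := fun hz => hz.1 rfl
    have hmul : ∀ h ∈ S, ∀ u : R, 0 < ρ.w u → σ.w u ≤ 0 → h * u ∈ S := by
      rintro h ⟨hh, g, rfl⟩ u hu1 _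
      exact ⟨ρ.mul_ne h1 hh hu1, g * u, by ring⟩
    obtain ⟨h, ⟨hh0, g, hfg⟩, hh2⟩ := ρ.descent σ h1 hu S hS h0S hmul
    have hUmem : h ∈ ρ.U ∩ σ.U := by
      constructor
      · show ρ.w h ≤ ρ.w 1
        rw [ρ.wone h1, ← hfg]
        exact hpos g
      · show σ.w h ≤ σ.w 1
        rw [σ.wone h1]
        exact hh2
    obtain ⟨lam, hlam⟩ := hU hUmem
    have hlam0 : lam ≠ 0 := fun e => hh0 (by rw [← hlam, e, map_zero])
    refine ⟨g * algebraMap F R lam⁻¹, ?_⟩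
    rw [← mul_assoc, hfg, ← hlam, ← map_mul, mul_inv_cancel₀ hlam0, map_one]

lemma NearWeight.xfin (ρ σ : NearWeight F R) (h1 : (1:R) ≠ 0)
    (hfin : (Hset ρ σ Set.univ)ᶜ.Finite)
    (f : R) (h0 : R) (hdvd : f ∣ h0) (hr : 0 < ρ.w h0) (hs : σ.w h0 ≤ 0) :
    ({p ∈ Hset ρ σ Set.univ | p.2 = 0} ∩
      (Hset ρ σ ((Ideal.span {f} : Ideal R) : Set R))ᶜ).Finite := by
  have hh0ne : h0 ≠ 0 := ρ.ne_zero_of_wpos hr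
  set c := ρ.nval h0 with hc
  have hA : ((fun k : ℕ => ((k, 0) : ℕ × ℕ)) ⁻¹' (Hset ρ σ Set.univ)ᶜ).Finite :=
    hfin.preimage (Function.Injective.injOn
      (fun a b hab => by simpa using congrArg Prod.fst hab))
  obtain ⟨B, hB⟩ := hA.bddAbove
  refine Set.Finite.subset ((Set.finite_Iic (B + c + 1)).prod (Set.finite_singleton 0)) ?_
  rintro p ⟨⟨hpH, hp2⟩, hpc⟩
  refine Set.mem_prod.mpr ⟨?_, hp2⟩
  show p.1 ≤ B + c + 1
  by_contra hgt
  push_neg at hgt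
  set k := p.1 - c with hk
  have hck : c ≤ p.1 := by omega
  have hkB : B < k := by omega
  have hknotA : k ∉ (fun k : ℕ => ((k, 0) : ℕ × ℕ)) ⁻¹' (Hset ρ σ Set.univ)ᶜ :=
    fun hmem => absurd (hB hmem) (not_le.mpr hkB)
  have hkH : ((k, 0) : ℕ × ℕ) ∈ Hset ρ σ Set.univ := not_not.mp hknotA
  obtain ⟨u, -, hune, huval⟩ := hkH
  have hval1 : ρ.nval u = k := congrArg Prod.fst huval
  have hval2 : σ.nval u = 0 := congrArg Prod.snd huval
  have hwu : ρ.w u = ((k : ℕ) : WithBot ℕ) := by rw [ρ.wval hune, hval1]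
  have hwu2 : σ.w u = 0 := by
    rw [σ.wval hune, hval2]; rfl
  have hkpos : (0 : WithBot ℕ) < ρ.w u := by
    rw [hwu]; exact_mod_cast (by omega : 0 < k)
  have hx_ne : h0 * u ≠ 0 := ρ.mul_ne h1 hh0ne hkpos
  have hxw : ρ.w (h0 * u) = ((c + k : ℕ) : WithBot ℕ) := by
    rw [ρ.N5' h0 u (by rw [ρ.wone h1]; exact hr) (by rw [ρ.wone h1]; exact hkpos),
      ρ.wval hh0ne, hwu, ← hc]
    push_cast
    ring
  have hxs : σ.w (h0 * u) ≤ 0 := by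
    refine (σ.N5 h0 u).trans ?_
    rw [hwu2]
    calc σ.w h0 + 0 = σ.w h0 := by simp
    _ ≤ 0 := hs
  have hxnvr : ρ.nval (h0 * u) = c + k := by
    have := (ρ.wval hx_ne).symm.trans hxw
    exact_mod_cast this
  have hxnvs : σ.nval (h0 * u) = 0 := by
    have hws : σ.w (h0 * u) = 0 := σ.norm0 _ hx_ne (by rw [σ.wone h1]; exact hxs)
    rw [NearWeight.nval, hws]; rfl
  apply hpc
  refine ⟨h0 * u, ?_, hx_ne, ?_⟩
  · exact SetLike.mem_coe.mpr (Ideal.mem_span_singleton.mpr (hdvd.mul_right u))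
  · rw [hxnvr, hxnvs]
    have h1eq : c + k = p.1 := by omega
    rw [Prod.ext_iff]
    exact ⟨h1eq, hp2.symm⟩

lemma NearWeight.yfin (ρ σ : NearWeight F R) (h1 : (1:R) ≠ 0)
    (hfin : (Hset ρ σ Set.univ)ᶜ.Finite)
    (f : R) (h0 : R) (hdvd : f ∣ h0) (hr : 0 < σ.w h0) (hs : ρ.w h0 ≤ 0) :
    ({p ∈ Hset ρ σ Set.univ | p.1 = 0} ∩
      (Hset ρ σ ((Ideal.span {f} : Ideal R) : Set R))ᶜ).Finite := by
  have hh0ne : h0 ≠ 0 := σ.ne_zero_of_wpos hr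
  set c := σ.nval h0 with hc
  have hA : ((fun k : ℕ => ((0, k) : ℕ × ℕ)) ⁻¹' (Hset ρ σ Set.univ)ᶜ).Finite :=
    hfin.preimage (Function.Injective.injOn
      (fun a b hab => by simpa using congrArg Prod.snd hab))
  obtain ⟨B, hB⟩ := hA.bddAbove
  refine Set.Finite.subset ((Set.finite_singleton 0).prod (Set.finite_Iic (B + c + 1))) ?_
  rintro p ⟨⟨hpH, hp2⟩, hpc⟩
  refine Set.mem_prod.mpr ⟨hp2, ?_⟩
  show p.2 ≤ B + c + 1
  by_contra hgt
  push_neg at hgt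
  set k := p.2 - c with hk
  have hck : c ≤ p.2 := by omega
  have hkB : B < k := by omega
  have hknotA : k ∉ (fun k : ℕ => ((0, k) : ℕ × ℕ)) ⁻¹' (Hset ρ σ Set.univ)ᶜ :=
    fun hmem => absurd (hB hmem) (not_le.mpr hkB)
  have hkH : ((0, k) : ℕ × ℕ) ∈ Hset ρ σ Set.univ := not_not.mp hknotA
  obtain ⟨u, -, hune, huval⟩ := hkH
  have hval1 : ρ.nval u = 0 := congrArg Prod.fst huval
  have hval2 : σ.nval u = k := congrArg Prod.snd huval
  have hwu : σ.w u = ((k : ℕ) : WithBot ℕ) := by rw [σ.wval hune, hval2]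
  have hwu2 : ρ.w u = 0 := by
    rw [ρ.wval hune, hval1]; rfl
  have hkpos : (0 : WithBot ℕ) < σ.w u := by
    rw [hwu]; exact_mod_cast (by omega : 0 < k)
  have hx_ne : h0 * u ≠ 0 := σ.mul_ne h1 hh0ne hkpos
  have hxw : σ.w (h0 * u) = ((c + k : ℕ) : WithBot ℕ) := by
    rw [σ.N5' h0 u (by rw [σ.wone h1]; exact hr) (by rw [σ.wone h1]; exact hkpos),
      σ.wval hh0ne, hwu, ← hc]
    push_cast
    ring
  have hxs : ρ.w (h0 * u) ≤ 0 := by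
    refine (ρ.N5 h0 u).trans ?_
    rw [hwu2]
    calc ρ.w h0 + 0 = ρ.w h0 := by simp
    _ ≤ 0 := hs
  have hxnvr : σ.nval (h0 * u) = c + k := by
    have := (σ.wval hx_ne).symm.trans hxw
    exact_mod_cast this
  have hxnvs : ρ.nval (h0 * u) = 0 := by
    have hws : ρ.w (h0 * u) = 0 := ρ.norm0 _ hx_ne (by rw [ρ.wone h1]; exact hxs)
    rw [NearWeight.nval, hws]; rfl
  apply hpc
  refine ⟨h0 * u, ?_, hx_ne, ?_⟩
  · exact SetLike.mem_coe.mpr (Ideal.mem_span_singleton.mpr (hdvd.mul_right u))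
  · rw [hxnvr, hxnvs]
    have h2eq : c + k = p.2 := by omega
    rw [Prod.ext_iff]
    exact ⟨hp2.symm, h2eq⟩

theorem stmt12
    (hinj : Function.Injective (algebraMap F R))
    (hsur : ¬ Function.Surjective (algebraMap F R))
    (ρ σ : NearWeight F R) (hwa : NearWeight.WellAgreeing ρ σ)
    (f : R) (hf : f ≠ 0) :
    ({p ∈ NearWeight.Hset ρ σ Set.univ | p.2 = 0} ∩
      (NearWeight.Hset ρ σ ((Ideal.span {f} : Ideal R) : Set R))ᶜ).Finite ∧
    ({p ∈ NearWeight.Hset ρ σ Set.univ | p.1 = 0} ∩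
      (NearWeight.Hset ρ σ ((Ideal.span {f} : Ideal R) : Set R))ᶜ).Finite := by
  have h1R : (1:R) ≠ 0 := by
    intro e
    have h01 : (1:F) = 0 := hinj (by rw [map_one, map_zero, e])
    exact one_ne_zero h01
  obtain ⟨hfin, hUU⟩ := hwa
  have hux : ∃ u : R, 0 < ρ.w u ∧ σ.w u ≤ 0 := by
    have hA : ((fun k : ℕ => ((k, 0) : ℕ × ℕ)) ⁻¹' (Hset ρ σ Set.univ)ᶜ).Finite :=
      hfin.preimage (Function.Injective.injOn
        (fun a b hab => by simpa using congrArg Prod.fst hab))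
    obtain ⟨B, hB⟩ := hA.bddAbove
    have hmem : ((B + 1 : ℕ), (0 : ℕ)) ∈ Hset ρ σ Set.univ := by
      by_contra hno
      exact absurd (hB hno) (by omega)
    obtain ⟨u, -, hune, huval⟩ := hmem
    have hval1 : ρ.nval u = B + 1 := congrArg Prod.fst huval
    have hval2 : σ.nval u = 0 := congrArg Prod.snd huval
    refine ⟨u, ?_, ?_⟩
    · rw [ρ.wval hune, hval1]
      exact_mod_cast Nat.succ_pos B
    · rw [σ.wval hune, hval2]
      exact le_rfl
  have huy : ∃ u : R, 0 < σ.w u ∧ ρ.w u ≤ 0 := by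
    have hA : ((fun k : ℕ => ((0, k) : ℕ × ℕ)) ⁻¹' (Hset ρ σ Set.univ)ᶜ).Finite :=
      hfin.preimage (Function.Injective.injOn
        (fun a b hab => by simpa using congrArg Prod.snd hab))
    obtain ⟨B, hB⟩ := hA.bddAbove
    have hmem : ((0 : ℕ), (B + 1 : ℕ)) ∈ Hset ρ σ Set.univ := by
      by_contra hno
      exact absurd (hB hno) (by omega)
    obtain ⟨u, -, hune, huval⟩ := hmem
    have hval1 : ρ.nval u = 0 := congrArg Prod.fst huval
    have hval2 : σ.nval u = B + 1 := congrArg Prod.snd huval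
    refine ⟨u, ?_, ?_⟩
    · rw [σ.wval hune, hval2]
      exact_mod_cast Nat.succ_pos B
    · rw [ρ.wval hune, hval1]
      exact le_rfl
  by_cases hunit : ∃ r : R, f * r = 1
  · obtain ⟨r, hrr⟩ := hunit
    have hspan : (Ideal.span {f} : Ideal R) = ⊤ :=
      Ideal.span_singleton_eq_top.mpr (IsUnit.of_mul_eq_one (a := f) r hrr)
    have hset : ((Ideal.span {f} : Ideal R) : Set R) = Set.univ := by rw [hspan]; rfl
    rw [hset]
    constructor <;>
    · refine Set.Finite.subset Set.finite_empty ?_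
      rintro p ⟨⟨hpH, -⟩, hpc⟩
      exact absurd hpH hpc
  · obtain ⟨g0, hg1, hg2⟩ :=
      (ρ.key σ h1R hUU.subset hux f hf).resolve_right hunit
    obtain ⟨g1, hgy1, hgy2⟩ :=
      (σ.key ρ h1R (by rw [Set.inter_comm]; exact hUU.subset) huy f hf).resolve_right hunit
    exact ⟨ρ.xfin σ h1R hfin f (f * g0) ⟨g0, rfl⟩ hg1 hg2,
      ρ.yfin σ h1R hfin f (f * g1) ⟨g1, rfl⟩ hgy1 hgy2⟩
end
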